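/- arXiv:2504.12650 — 3 statements merged into one kernel-verified Lean document; each statement's English description precedes it below -/
import Mathlib

section
/- Let R₀ ∈ SO(n) and let Z be a real skew-symmetric n×n matrix such that I − ZᵀZ is positive definite. Define the correction term C = √(I − ZᵀZ) − I. Then R₀(I + Z + C) ∈ SO(n). -/
open Matrix Polynomial

open scoped ComplexOrder in
/-- The square root of a positive semidefinite matrix, with the definition that
`Matrix.PosSemidef.sqrt` had in Mathlib (December 2024); it has since been removed. -/
noncomputable def Matrix.PosSemidef.sqrt {n 𝕜 : Type*} [Fintype n] [RCLike 𝕜] [DecidableEq n]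
    {A : Matrix n n 𝕜} (hA : A.PosSemidef) : Matrix n n 𝕜 :=
  hA.1.eigenvectorUnitary.1 * diagonal ((↑) ∘ (√·) ∘ hA.1.eigenvalues) *
    (star hA.1.eigenvectorUnitary : Matrix n n 𝕜)

variable {n : ℕ}

lemma psd_sqrt_posSemidef {A : Matrix (Fin n) (Fin n) ℝ} (hA : A.PosSemidef) :
    hA.sqrt.PosSemidef := by
  unfold Matrix.PosSemidef.sqrt
  have h := Matrix.PosSemidef.diagonal (R := ℝ)
    (d := fun i => Real.sqrt (hA.1.eigenvalues i)) (fun i => Real.sqrt_nonneg (hA.1.eigenvalues i))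
  rw [Matrix.star_eq_conjTranspose]
  exact h.mul_mul_conjTranspose_same _

lemma psd_sqrt_mul_self {A : Matrix (Fin n) (Fin n) ℝ} (hA : A.PosSemidef) :
    hA.sqrt * hA.sqrt = A := by
  have hU' : star (hA.1.eigenvectorUnitary : Matrix (Fin n) (Fin n) ℝ) *
      (hA.1.eigenvectorUnitary : Matrix (Fin n) (Fin n) ℝ) = 1 := Unitary.coe_star_mul_self _
  have hs : A = (hA.1.eigenvectorUnitary : Matrix (Fin n) (Fin n) ℝ) *
      diagonal (RCLike.ofReal ∘ hA.1.eigenvalues) *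
      star (hA.1.eigenvectorUnitary : Matrix (Fin n) (Fin n) ℝ) :=
    hA.1.spectral_theorem
  unfold Matrix.PosSemidef.sqrt
  calc _ = (hA.1.eigenvectorUnitary : Matrix (Fin n) (Fin n) ℝ) *
        (diagonal ((↑) ∘ (√·) ∘ hA.1.eigenvalues) *
          (star (hA.1.eigenvectorUnitary : Matrix (Fin n) (Fin n) ℝ) *
            (hA.1.eigenvectorUnitary : Matrix (Fin n) (Fin n) ℝ)) *
          diagonal ((↑) ∘ (√·) ∘ hA.1.eigenvalues)) *
        star (hA.1.eigenvectorUnitary : Matrix (Fin n) (Fin n) ℝ) := by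
          simp only [mul_assoc]; rfl
    _ = _ := by
      rw [hU', mul_one, diagonal_mul_diagonal]
      conv_rhs => rw [hs]
      congr 2
      ext i j
      simp [diagonal_apply, Real.mul_self_sqrt (hA.eigenvalues_nonneg i)]

/-- Conjugation of a diagonal matrix by an orthogonal matrix, as an algebra hom. -/
noncomputable def conjDiag (U : Matrix (Fin n) (Fin n) ℝ)
    (hU : U * star U = 1) (hU' : star U * U = 1) :
    ((Fin n) → ℝ) →ₐ[ℝ] Matrix (Fin n) (Fin n) ℝ where
  toFun d := U * diagonal d * star U
  map_one' := by
    show U * diagonal (1 : Fin n → ℝ) * star U = 1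
    rw [show diagonal (1 : Fin n → ℝ) = 1 from by
      ext i j; by_cases hij : i = j <;> simp [diagonal, one_apply, hij]]
    simp [hU]
  map_mul' d e := by
    show U * diagonal (d * e) * star U = (U * diagonal d * star U) * (U * diagonal e * star U)
    have h1 : U * diagonal d * star U * (U * diagonal e * star U)
        = U * (diagonal d * (star U * U) * diagonal e) * star U := by
      simp only [mul_assoc]
    rw [h1, hU', mul_one, diagonal_mul_diagonal]
    rfl
  map_zero' := by
    show U * diagonal (0 : Fin n → ℝ) * star U = 0
    rw [show diagonal (0 : Fin n → ℝ) = 0 from by ext i j; simp [diagonal]]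
    simp
  map_add' d e := by
    have hde : diagonal (d + e) = diagonal d + diagonal e := by
      rw [diagonal_add]; rfl
    simp only [hde, mul_add, add_mul]
  commutes' r := by
    have : (algebraMap ℝ ((Fin n) → ℝ)) r = fun _ => r := rfl
    rw [this]
    have h2 : (diagonal (fun _ : Fin n => r)) = r • (1 : Matrix (Fin n) (Fin n) ℝ) := by
      ext i j; by_cases hij : i = j <;> simp [diagonal, one_apply, hij]
    show U * diagonal (fun _ : Fin n => r) * star U = _
    rw [h2, Algebra.algebraMap_eq_smul_one]
    simp [mul_smul_comm, smul_mul_assoc, hU]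

lemma sqrt_comm {A : Matrix (Fin n) (Fin n) ℝ} (hA : A.PosSemidef)
    {Z : Matrix (Fin n) (Fin n) ℝ} (h : Commute Z A) : Commute Z hA.sqrt := by
  classical
  set U : Matrix (Fin n) (Fin n) ℝ := (hA.1.eigenvectorUnitary : Matrix (Fin n) (Fin n) ℝ)
  have hU : U * star U = 1 := Unitary.coe_mul_star_self _
  have hU' : star U * U = 1 := Unitary.coe_star_mul_self _
  set φ := conjDiag U hU hU' with hφ
  have hAeq : A = φ hA.1.eigenvalues := by
    conv_lhs => rw [hA.1.spectral_theorem]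
    simp [U, φ, hφ, conjDiag, RCLike.ofReal_real_eq_id, Function.comp_def]
  have hsqrt : hA.sqrt = φ (Real.sqrt ∘ hA.1.eigenvalues) := by
    rw [Matrix.PosSemidef.sqrt]
    simp [U, φ, hφ, conjDiag, RCLike.ofReal_real_eq_id, Function.comp_def]
  set s : Finset ℝ := Finset.univ.image hA.1.eigenvalues with hs
  set p : ℝ[X] := Lagrange.interpolate s id Real.sqrt with hp
  have hinj : Set.InjOn (id : ℝ → ℝ) s := Function.injective_id.injOn
  have hpA : aeval A p = hA.sqrt := by
    conv_lhs => rw [hAeq]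
    rw [aeval_algHom_apply, hsqrt]
    congr 1
    funext i
    have := aeval_algHom_apply (Pi.evalAlgHom ℝ (fun _ : Fin n => ℝ) i) hA.1.eigenvalues p
    have h2 : (aeval hA.1.eigenvalues p) i = aeval (hA.1.eigenvalues i) p := this.symm
    rw [Function.comp_apply, h2, aeval_def, eval₂_eq_eval_map, Algebra.algebraMap_self, Polynomial.map_id]
    have hmem : hA.1.eigenvalues i ∈ s := Finset.mem_image_of_mem _ (Finset.mem_univ i)
    have := Lagrange.eval_interpolate_at_node Real.sqrt hinj hmem
    simpa [p] using this
  rw [← hpA]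
  induction p using Polynomial.induction_on' with
  | add p q hp hq => simpa [map_add] using hp.add_right hq
  | monomial k c =>
    rw [aeval_monomial]
    exact (Algebra.commute_algebraMap_left c Z).symm.mul_right (h.pow_right k)

/-- Let `R₀ ∈ SO(n)` and let `Z` be a real skew-symmetric `n × n` matrix
such that `I - Zᵀ Z` is positive definite.  With the correction term
`C = √(I - Zᵀ Z) - I` (where the square root is the unique positive (semi)definite square
root), the updated point `R₀ (I + Z + C)` again lies in `SO(n)`, i.e. it is orthogonal
with determinant one. -/
theorem stmt0 {n : ℕ} (R₀ Z C : Matrix (Fin n) (Fin n) ℝ)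
    (hR₀ : R₀ᵀ * R₀ = 1) (hdetR₀ : R₀.det = 1)
    (hZ : Zᵀ = -Z) (hpd : (1 - Zᵀ * Z).PosDef)
    (hC : C = hpd.posSemidef.sqrt - 1) :
    (R₀ * (1 + Z + C))ᵀ * (R₀ * (1 + Z + C)) = 1 ∧ (R₀ * (1 + Z + C)).det = 1 := by
  classical
  set B := hpd.posSemidef.sqrt with hB
  have hBB : B * B = 1 - Zᵀ * Z := psd_sqrt_mul_self hpd.posSemidef
  have hBsymm : Bᵀ = B := by
    have := (psd_sqrt_posSemidef hpd.posSemidef).isHermitian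
    rwa [Matrix.IsHermitian, conjTranspose_eq_transpose_of_trivial] at this
  have hZA : Commute Z (1 - Zᵀ * Z) := by
    rw [hZ]
    show Z * _ = _ * Z
    noncomm_ring
  have hcomm : Commute Z B := sqrt_comm hpd.posSemidef hZA
  have hS : 1 + Z + C = B + Z := by rw [hC]; abel
  rw [hS]
  -- orthogonality of B + Z
  have key : (B + Z)ᵀ * (B + Z) = 1 := by
    rw [transpose_add, hBsymm, hZ]
    calc (B + -Z) * (B + Z)
        = B * B - Z * Z + (B * Z - Z * B) := by noncomm_ring
      _ = B * B - Z * Z := by rw [hcomm.eq, sub_self, add_zero]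
      _ = 1 := by rw [hBB, hZ]; noncomm_ring
  have horth : (R₀ * (B + Z))ᵀ * (R₀ * (B + Z)) = 1 := by
    rw [transpose_mul, mul_assoc, ← mul_assoc R₀ᵀ, hR₀, one_mul, key]
  refine ⟨horth, ?_⟩
  -- determinant
  rw [det_mul, hdetR₀, one_mul]
  -- B is positive definite
  have hBpd : B.PosDef := by
    refine Matrix.PosDef.of_dotProduct_mulVec_pos (psd_sqrt_posSemidef hpd.posSemidef).isHermitian fun v hv => ?_
    refine lt_of_le_of_ne ((psd_sqrt_posSemidef hpd.posSemidef).dotProduct_mulVec_nonneg v) fun h0 => ?_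
    have hBv : B *ᵥ v = 0 :=
      ((psd_sqrt_posSemidef hpd.posSemidef).dotProduct_mulVec_zero_iff v).mp h0.symm
    have hAv : (1 - Zᵀ * Z) *ᵥ v = 0 := by
      rw [← hBB, ← mulVec_mulVec, hBv, mulVec_zero]
    have := hpd.dotProduct_mulVec_pos hv
    rw [hAv, dotProduct_zero] at this
    exact lt_irrefl 0 this
  -- the determinant along the path t ↦ B + t • Z never vanishes
  have hnz : ∀ t : ℝ, (B + t • Z).det ≠ 0 := by
    intro t hdet
    obtain ⟨v, hv0, hveq⟩ := (Matrix.exists_mulVec_eq_zero_iff).mpr hdet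
    have hskew : v ⬝ᵥ Z *ᵥ v = 0 := by
      have h1 : v ⬝ᵥ Z *ᵥ v = -(v ⬝ᵥ Z *ᵥ v) := by
        conv_lhs => rw [dotProduct_mulVec, ← mulVec_transpose, hZ, neg_mulVec,
          neg_dotProduct, dotProduct_comm]
      linarith
    have h3 : v ⬝ᵥ B *ᵥ v = 0 := by
      have h2 := congrArg (fun w => v ⬝ᵥ w) hveq
      simp only [add_mulVec, dotProduct_add, smul_mulVec, dotProduct_smul,
        dotProduct_zero, smul_eq_mul] at h2
      rw [hskew, mul_zero, add_zero] at h2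
      exact h2
    have := hBpd.dotProduct_mulVec_pos hv0
    rw [show star v = v from star_trivial v] at this
    rw [h3] at this
    exact lt_irrefl 0 this
  -- continuity and IVT
  have hcont : Continuous fun t : ℝ => (B + t • Z).det := by
    apply Continuous.matrix_det
    exact continuous_const.add (continuous_id.smul continuous_const)
  have hdsq : (B + Z).det * (B + Z).det = 1 := by
    have := congrArg Matrix.det key
    rwa [det_mul, det_transpose, det_one] at this
  rcases mul_self_eq_one_iff.mp hdsq with h1 | h1
  · exact h1
  · exfalso
    have hf0 : 0 < (B + (0:ℝ) • Z).det := by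
      simpa using hBpd.det_pos
    have hf1 : (B + (1:ℝ) • Z).det = -1 := by simpa using h1
    have hsub : Set.Icc ((fun t : ℝ => (B + t • Z).det) 1)
        ((fun t : ℝ => (B + t • Z).det) 0) ⊆
        (fun t : ℝ => (B + t • Z).det) '' Set.Icc 0 1 :=
      intermediate_value_Icc' (by norm_num) hcont.continuousOn
    have h0mem : (0:ℝ) ∈ Set.Icc ((fun t : ℝ => (B + t • Z).det) 1)
        ((fun t : ℝ => (B + t • Z).det) 0) := by
      simp only [hf1, Set.mem_Icc]
      exact ⟨by norm_num, le_of_lt hf0⟩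
    obtain ⟨t, _, ht⟩ := hsub h0mem
    exact hnz t ht
end

section
/- Let Z be a real skew-symmetric n×n matrix such that I − ZᵀZ is positive definite. Then det(Z + √(I − ZᵀZ)) = 1. -/
open Matrix

open scoped MatrixOrder in
lemma Matrix.PosSemidef.sqrt_eq_cfcSqrt {n : Type*} [Fintype n] [DecidableEq n]
    {A : Matrix n n ℝ} (hA : A.PosSemidef) : hA.sqrt = CFC.sqrt A := by
  rw [CFC.sqrt_eq_cfc, cfc_nnreal_eq_real _ A, hA.1.cfc_eq]
  simp only [Matrix.PosSemidef.sqrt, IsHermitian.cfc, Unitary.conjStarAlgAut_apply]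
  congr 3
  funext i
  simp [Real.coe_toNNReal', max_eq_left (hA.eigenvalues_nonneg i)]

open scoped MatrixOrder in
lemma Matrix.PosSemidef.posSemidef_sqrt {n : Type*} [Fintype n] [DecidableEq n]
    {A : Matrix n n ℝ} (hA : A.PosSemidef) : hA.sqrt.PosSemidef := by
  rw [hA.sqrt_eq_cfcSqrt]
  exact nonneg_iff_posSemidef.mp (CFC.sqrt_nonneg A)

open scoped MatrixOrder in
lemma Matrix.PosSemidef.sqrt_mul_self {n : Type*} [Fintype n] [DecidableEq n]
    {A : Matrix n n ℝ} (hA : A.PosSemidef) : hA.sqrt * hA.sqrt = A := by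
  rw [hA.sqrt_eq_cfcSqrt]
  exact CFC.sqrt_mul_sqrt_self A hA.nonneg

open scoped MatrixOrder in
lemma Matrix.PosSemidef.eq_sqrt_of_sq_eq {n : Type*} [Fintype n] [DecidableEq n]
    {B : Matrix n n ℝ} (hB : B.PosSemidef) {A : Matrix n n ℝ} (hA : A.PosSemidef)
    (h : B ^ 2 = A) : B = hA.sqrt := by
  rw [hA.sqrt_eq_cfcSqrt, eq_comm, CFC.sqrt_eq_iff A B hA.nonneg hB.nonneg, ← sq, h]

lemma skew_quad {n : ℕ} {Z : Matrix (Fin n) (Fin n) ℝ} (hZ : Zᵀ = -Z) (x : Fin n → ℝ) :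
    x ⬝ᵥ (Z *ᵥ x) = 0 := by
  have h : x ⬝ᵥ (Z *ᵥ x) = (Zᵀ *ᵥ x) ⬝ᵥ x := by
    rw [dotProduct_mulVec, mulVec_transpose]
  rw [hZ] at h
  simp only [neg_mulVec, neg_dotProduct] at h
  have hc := dotProduct_comm (Z *ᵥ x) x
  linarith

lemma dp_self_nonneg {n : ℕ} (v : Fin n → ℝ) : 0 ≤ v ⬝ᵥ v :=
  Finset.sum_nonneg fun i _ => mul_self_nonneg _

set_option maxHeartbeats 1000000 in
/-- Let `Z` be a real skew-symmetric `n × n` matrix such that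
`I - Zᵀ Z` is positive definite.  Then `det (Z + √(I - Zᵀ Z)) = 1`, where the square
root is the unique positive (semi)definite square root. -/
theorem stmt2 {n : ℕ} (Z : Matrix (Fin n) (Fin n) ℝ)
    (hZ : Zᵀ = -Z) (hpd : (1 - Zᵀ * Z).PosDef) :
    (Z + hpd.posSemidef.sqrt).det = 1 := by
  set S := hpd.posSemidef.sqrt with hSdef
  set A : Matrix (Fin n) (Fin n) ℝ := 1 - Zᵀ * Z with hAdef
  have hA : A = 1 + Z * Z := by rw [hAdef, hZ]; noncomm_ring
  have hSpsd : S.PosSemidef := hpd.posSemidef.posSemidef_sqrt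
  have hSsq : S * S = A := hpd.posSemidef.sqrt_mul_self
  have hST : Sᵀ = S := by
    have := hSpsd.1
    rwa [Matrix.IsHermitian, conjTranspose_eq_transpose_of_trivial] at this
  -- invertibility of 1 + Z and 1 - Z
  have hWdet : (1 + Z).det ≠ 0 := by
    intro h0
    obtain ⟨x, hx0, hx⟩ := (Matrix.exists_mulVec_eq_zero_iff).mpr h0
    have h1 : x ⬝ᵥ ((1 + Z) *ᵥ x) = 0 := by rw [hx, dotProduct_zero]
    rw [add_mulVec, dotProduct_add, one_mulVec, skew_quad hZ x] at h1
    have : x ⬝ᵥ x = 0 := by linarith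
    exact hx0 (dotProduct_self_eq_zero.mp this)
  have hWunit : IsUnit (1 + Z).det := isUnit_iff_ne_zero.mpr hWdet
  set W : Matrix (Fin n) (Fin n) ℝ := 1 + Z with hWdef
  have hWWi : W * W⁻¹ = 1 := mul_nonsing_inv W hWunit
  have hWiW : W⁻¹ * W = 1 := nonsing_inv_mul W hWunit
  have hW'eq : (1 - Z) = Wᵀ := by
    rw [hWdef, transpose_add, transpose_one, hZ, sub_eq_add_neg]
  have hW'det : (1 - Z).det ≠ 0 := by rw [hW'eq, det_transpose]; exact hWdet
  have hW'unit : IsUnit (1 - Z).det := isUnit_iff_ne_zero.mpr hW'det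
  have hW'iW : (1 - Z)⁻¹ * (1 - Z) = 1 := nonsing_inv_mul _ hW'unit
  set U : Matrix (Fin n) (Fin n) ℝ := (1 - Z) * W⁻¹ with hUdef
  have hUT : Uᵀ = (1 - Z)⁻¹ * W := by
    rw [hUdef, transpose_mul, transpose_nonsing_inv, hWdef, transpose_add, transpose_one, hZ,
      transpose_sub, transpose_one, hZ, sub_neg_eq_add, ← sub_eq_add_neg]
  have hcommWW' : W * (1 - Z) = (1 - Z) * W := by rw [hWdef]; noncomm_ring
  have hUTU : Uᵀ * U = 1 := by
    rw [hUT, hUdef]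
    calc (1 - Z)⁻¹ * W * ((1 - Z) * W⁻¹) = (1 - Z)⁻¹ * (W * (1 - Z)) * W⁻¹ := by noncomm_ring
    _ = (1 - Z)⁻¹ * ((1 - Z) * W) * W⁻¹ := by rw [hcommWW']
    _ = ((1 - Z)⁻¹ * (1 - Z)) * (W * W⁻¹) := by noncomm_ring
    _ = 1 := by rw [hW'iW, hWWi, one_mul]
  have hUUT : U * Uᵀ = 1 := mul_eq_one_comm.mp hUTU
  -- A commutes with W, W⁻¹, U
  have hAW : A * W = W * A := by rw [hWdef, hA]; noncomm_ring
  have hAWi : A * W⁻¹ = W⁻¹ * A := by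
    calc A * W⁻¹ = W⁻¹ * (W * A) * W⁻¹ := by rw [← mul_assoc, hWiW, one_mul]
    _ = W⁻¹ * (A * W) * W⁻¹ := by rw [hAW]
    _ = W⁻¹ * A * (W * W⁻¹) := by noncomm_ring
    _ = W⁻¹ * A := by rw [hWWi, mul_one]
  have hAU : A * U = U * A := by
    rw [hUdef]
    calc A * ((1 - Z) * W⁻¹) = ((1 - Z) * A) * W⁻¹ := by
          rw [← mul_assoc]; congr 1; rw [hA]; noncomm_ring
    _ = (1 - Z) * (A * W⁻¹) := by rw [mul_assoc]
    _ = (1 - Z) * W⁻¹ * A := by rw [hAWi, mul_assoc]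
  -- T = U S Uᵀ is the psd square root of A, hence equals S
  have hTpsd : (U * S * Uᵀ).PosSemidef := by
    have := hSpsd.mul_mul_conjTranspose_same U
    rwa [conjTranspose_eq_transpose_of_trivial] at this
  have hTsq : (U * S * Uᵀ) ^ 2 = A := by
    rw [pow_two]
    calc U * S * Uᵀ * (U * S * Uᵀ) = U * (S * (Uᵀ * U) * S) * Uᵀ := by noncomm_ring
    _ = U * (S * S) * Uᵀ := by rw [hUTU, mul_one]
    _ = U * A * Uᵀ := by rw [hSsq]
    _ = A * (U * Uᵀ) := by rw [← hAU, mul_assoc]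
    _ = A := by rw [hUUT, mul_one]
  have hTS : U * S * Uᵀ = S := hTpsd.eq_sqrt_of_sq_eq hpd.posSemidef hTsq
  have hUS : U * S = S * U := by
    calc U * S = U * S * (Uᵀ * U) := by rw [hUTU, mul_one]
    _ = (U * S * Uᵀ) * U := by noncomm_ring
    _ = S * U := by rw [hTS]
  -- W⁻¹ commutes with S, then Z commutes with S
  have hU2 : U = W⁻¹ + W⁻¹ - 1 := by
    have h1Z : (1 : Matrix (Fin n) (Fin n) ℝ) - Z = (1 + 1) - W := by rw [hWdef]; abel
    rw [hUdef, h1Z, sub_mul, add_mul, one_mul, hWWi]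
  have hWiS : W⁻¹ * S = S * W⁻¹ := by
    rw [hU2] at hUS
    simp only [sub_mul, add_mul, mul_sub, mul_add, one_mul, mul_one] at hUS
    have h2 : W⁻¹ * S + W⁻¹ * S = S * W⁻¹ + S * W⁻¹ := sub_left_inj.mp hUS
    have h3 : (2 : ℝ) • (W⁻¹ * S) = (2 : ℝ) • (S * W⁻¹) := by
      rw [two_smul, two_smul]; exact h2
    exact smul_right_injective _ two_ne_zero h3
  have hWS : W * S = S * W := by
    calc W * S = W * S * (W⁻¹ * W) := by rw [hWiW, mul_one]
    _ = W * (S * W⁻¹) * W := by noncomm_ring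
    _ = W * (W⁻¹ * S) * W := by rw [hWiS]
    _ = (W * W⁻¹) * (S * W) := by noncomm_ring
    _ = S * W := by rw [hWWi, one_mul]
  have hZS : Z * S = S * Z := by
    rw [hWdef] at hWS
    simp only [add_mul, mul_add, one_mul, mul_one] at hWS
    exact add_left_cancel hWS
  -- determinant squared is 1
  have hdT : (Z + S)ᵀ = S - Z := by rw [transpose_add, hZ, hST]; abel
  have hprod : (Z + S) * (S - Z) = 1 := by
    have : (Z + S) * (S - Z) = S * S + Z * S - S * Z - Z * Z := by noncomm_ring
    rw [this, hZS, hSsq, hA]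
    abel
  have hdet2 : (Z + S).det * (Z + S).det = 1 := by
    have h1 : (Z + S).det = (S - Z).det := by rw [← hdT, det_transpose]
    calc (Z + S).det * (Z + S).det = (Z + S).det * (S - Z).det := by rw [h1]
    _ = ((Z + S) * (S - Z)).det := (det_mul _ _).symm
    _ = 1 := by rw [hprod, det_one]
  -- positivity of the determinant via a homotopy
  have hdetS : 0 < S.det := by
    have hSS : S.det * S.det = A.det := by rw [← det_mul, hSsq]
    have hnn : 0 ≤ S.det := hSpsd.det_nonneg
    have hApos := hpd.det_pos
    nlinarith
  have hne : ∀ t : ℝ, (S + t • Z).det ≠ 0 := by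
    intro t h0
    obtain ⟨x, hx0, hx⟩ := (Matrix.exists_mulVec_eq_zero_iff).mpr h0
    have hcomm : (t • Z) * S = S * (t • Z) := by
      rw [smul_mul_assoc, hZS, mul_smul_comm]
    have hfact : (S - t • Z) * (S + t • Z) = S * S - (t • Z) * (t • Z) := by
      have h1 : (S - t • Z) * (S + t • Z)
          = S * S + S * (t • Z) - (t • Z) * S - (t • Z) * (t • Z) := by
        simp only [sub_mul, mul_add]; abel
      rw [h1, hcomm]; abel
    have hker : (S * S - (t • Z) * (t • Z)) *ᵥ x = 0 := by
      rw [← hfact, ← mulVec_mulVec, hx, mulVec_zero]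
    have hq : x ⬝ᵥ ((S * S - (t • Z) * (t • Z)) *ᵥ x) = 0 := by rw [hker, dotProduct_zero]
    have hsm : (t • Z) * (t • Z) = (t * t) • (Z * Z) := by
      rw [smul_mul_assoc, mul_smul_comm, smul_smul]
    rw [hsm, hSsq, sub_mulVec, dotProduct_sub, smul_mulVec, dotProduct_smul] at hq
    have hZZ : x ⬝ᵥ ((Z * Z) *ᵥ x) = -((Z *ᵥ x) ⬝ᵥ (Z *ᵥ x)) := by
      rw [← mulVec_mulVec, dotProduct_mulVec, ← mulVec_transpose, hZ, neg_mulVec,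
        neg_dotProduct]
    have hApos : 0 < x ⬝ᵥ (A *ᵥ x) := by simpa using hpd.dotProduct_mulVec_pos hx0
    have hnn := dp_self_nonneg (Z *ᵥ x)
    rw [hZZ] at hq
    simp only [smul_eq_mul] at hq
    nlinarith [mul_self_nonneg t]
  have hdetpos : 0 < (Z + S).det := by
    set f : ℝ → ℝ := fun t => (S + t • Z).det with hf
    have hcont : Continuous f :=
      (continuous_const.add (continuous_id.smul continuous_const)).matrix_det
    have hf0 : 0 < f 0 := by
      have : f 0 = S.det := by simp [hf]
      rw [this]; exact hdetS
    have hf1 : f 1 = (Z + S).det := by simp [hf, add_comm]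
    by_contra hle
    push_neg at hle
    have hf1' : f 1 < 0 := by
      rw [hf1]
      exact lt_of_le_of_ne hle (by rw [← hf1]; exact hne 1)
    obtain ⟨c, _, hc⟩ := intermediate_value_Icc' (by norm_num : (0:ℝ) ≤ 1)
      hcont.continuousOn ⟨hf1'.le, hf0.le⟩
    exact hne c hc
  nlinarith
end

section
/- Let Z be a real skew-symmetric n×n matrix. Then there exist an orthogonal n×n matrix P, a nonnegative integer l with 2l ≤ n, and real numbers λ₁, …, λ_l such that Z = P Θ Pᵀ, where Θ is the block-diagonal matrix diag(E(λ₁), …, E(λ_l), 0) whose leading 2×2 diagonal blocks are E(λᵢ) = [[0, λᵢ], [−λᵢ, 0]] and whose remaining (n − 2l)×(n − 2l) diagonal block is zero (real Schur canonical form of a skew-symmetric matrix). -/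
open Matrix

/-- The block-diagonal `n × n` matrix `diag(E(λ₁), …, E(λ_l), 0)`, where
`E(λ) = [[0, λ], [-λ, 0]]`: the `k`-th `2 × 2` block occupies rows/columns
`2k` and `2k + 1`, and all remaining entries vanish. -/
def skewBlockDiag (n l : ℕ) (lam : Fin l → ℝ) : Matrix (Fin n) (Fin n) ℝ :=
  Matrix.of fun i j =>
    if h : (j : ℕ) = (i : ℕ) + 1 ∧ (i : ℕ) % 2 = 0 ∧ (j : ℕ) < 2 * l then
      lam ⟨(i : ℕ) / 2, by omega⟩
    else if h' : (i : ℕ) = (j : ℕ) + 1 ∧ (j : ℕ) % 2 = 0 ∧ (i : ℕ) < 2 * l then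
      -lam ⟨(j : ℕ) / 2, by omega⟩
    else 0

lemma skewBlockDiag_zero (n : ℕ) (lam : Fin 0 → ℝ) : skewBlockDiag n 0 lam = 0 := by
  ext i j
  simp only [skewBlockDiag, of_apply, Matrix.zero_apply]
  split_ifs with h h' <;> first | omega | rfl

lemma skewBlockDiag_block (m l : ℕ) (lam : Fin l → ℝ) (a : ℝ) :
    (skewBlockDiag (2 + m) (l + 1) (Fin.cons a lam)).submatrix
        (finSumFinEquiv : Fin 2 ⊕ Fin m ≃ Fin (2 + m)) finSumFinEquiv =
      fromBlocks !![0, a; -a, 0] 0 0 (skewBlockDiag m l lam) := by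
  have hcons : ∀ (k : ℕ) (h : (2 + k)/2 < l + 1) (h' : k/2 < l),
      (Fin.cons a lam : Fin (l+1) → ℝ) ⟨(2 + k)/2, h⟩ = lam ⟨k/2, h'⟩ := by
    intro k h h'
    rw [show (⟨(2 + k)/2, h⟩ : Fin (l+1)) = Fin.succ ⟨k/2, h'⟩ from
      Fin.ext (by show (2 + k)/2 = k/2 + 1; omega), Fin.cons_succ]
  ext x y
  cases x with
  | inl p =>
    cases y with
    | inl q =>
      fin_cases p <;> fin_cases q <;>
        simp [skewBlockDiag, fromBlocks, Fin.cons] <;> omega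
    | inr q =>
      have hq : ((finSumFinEquiv (Sum.inr q : Fin 2 ⊕ Fin m)) : ℕ) = 2 + (q : ℕ) := by simp
      fin_cases p <;>
        · simp only [submatrix_apply, skewBlockDiag, of_apply, fromBlocks,
            Sum.elim_inl, Sum.elim_inr, Matrix.zero_apply]
          rw [dif_neg, dif_neg] <;> simp [hq] <;> omega
  | inr p =>
    have hp : ((finSumFinEquiv (Sum.inr p : Fin 2 ⊕ Fin m)) : ℕ) = 2 + (p : ℕ) := by simp
    cases y with
    | inl q =>
      fin_cases q <;>
        · simp only [submatrix_apply, skewBlockDiag, of_apply, fromBlocks,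
            Sum.elim_inl, Sum.elim_inr, Matrix.zero_apply]
          rw [dif_neg, dif_neg] <;> simp [hp] <;> omega
    | inr q =>
      have hq : ((finSumFinEquiv (Sum.inr q : Fin 2 ⊕ Fin m)) : ℕ) = 2 + (q : ℕ) := by simp
      simp only [submatrix_apply, skewBlockDiag, of_apply, fromBlocks, Sum.elim_inr, hp, hq]
      split_ifs <;>
        first
          | omega
          | exact hcons _ _ (by omega)
          | rw [hcons _ _ (by omega)]
          | rfl

lemma skew_aux : ∀ (n : ℕ) (Z : Matrix (Fin n) (Fin n) ℝ), Zᵀ = -Z →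
    ∃ (l : ℕ) (_ : 2 * l ≤ n) (lam : Fin l → ℝ) (P : Matrix (Fin n) (Fin n) ℝ),
      Pᵀ * P = 1 ∧ Z = P * skewBlockDiag n l lam * Pᵀ := by
  intro n
  induction n using Nat.strong_induction_on with
  | _ n IH =>
  intro Z hZ
  by_cases hZ0 : Z = 0
  · exact ⟨0, by omega, Fin.elim0, 1, by simp, by simp [hZ0, skewBlockDiag_zero]⟩
  have hn2 : 2 ≤ n := by
    by_contra h
    apply hZ0
    ext i j
    have hij : i = j := by
      have h1 : (i : ℕ) < n := i.2
      have h2 : (j : ℕ) < n := j.2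
      exact Fin.ext (by omega)
    subst hij
    have := congrFun (congrFun hZ i) i
    simp only [Matrix.transpose_apply, Matrix.neg_apply] at this
    simp only [Matrix.zero_apply]
    linarith
  obtain ⟨m, rfl⟩ : ∃ m, n = 2 + m := ⟨n - 2, by omega⟩
  have hS : (Zᴴ * Z).IsHermitian := Matrix.isHermitian_conjTranspose_mul_self Z
  have hST : Zᴴ = Zᵀ := by ext i j; simp [conjTranspose]
  obtain ⟨j0, hj0⟩ : ∃ j, hS.eigenvalues j ≠ 0 := by
    by_contra h
    push_neg at h
    apply hZ0
    apply Matrix.conjTranspose_mul_self_eq_zero.mp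
    have hsp := hS.spectral_theorem
    have : (RCLike.ofReal ∘ hS.eigenvalues : Fin (2+m) → ℝ) = 0 := by
      funext i; rw [Function.comp_apply, h i]; simp
    rw [this] at hsp
    rw [hsp, show (diagonal (0 : Fin (2+m) → ℝ)) = 0 from Matrix.diagonal_zero]
    simp
  set μ := hS.eigenvalues j0 with hμdef
  set u : EuclideanSpace ℝ (Fin (2+m)) := hS.eigenvectorBasis j0 with hudef
  have hu : (Zᵀ * Z) *ᵥ (u : Fin (2+m) → ℝ) = μ • (u : Fin (2+m) → ℝ) := by
    rw [← hST]; exact hS.mulVec_eigenvectorBasis j0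
  have hdot : ∀ x y : EuclideanSpace ℝ (Fin (2+m)), (inner ℝ x y : ℝ) = (x : Fin (2+m) → ℝ) ⬝ᵥ y := by
    intro x y
    simp [EuclideanSpace.inner_eq_star_dotProduct]
    exact dotProduct_comm _ _
  have huu : (u : Fin (2+m) → ℝ) ⬝ᵥ (u : Fin (2+m) → ℝ) = 1 := by
    rw [← hdot u u, real_inner_self_eq_norm_sq]
    simp [hudef, (hS.eigenvectorBasis.orthonormal).1 j0]
  have hμ : μ = (Z *ᵥ u) ⬝ᵥ (Z *ᵥ u) := by
    have h1 : (u : Fin (2+m) → ℝ) ⬝ᵥ ((Zᵀ * Z) *ᵥ u) = μ := by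
      rw [hu, dotProduct_smul, huu, smul_eq_mul, mul_one]
    rw [← h1, ← Matrix.mulVec_mulVec, dotProduct_mulVec, Matrix.vecMul_transpose]
  have hμpos : 0 < μ := by
    have hnn : 0 ≤ (Z *ᵥ (u : Fin (2+m) → ℝ)) ⬝ᵥ (Z *ᵥ u) :=
      Finset.sum_nonneg fun i _ => mul_self_nonneg _
    rcases lt_or_eq_of_le hnn with h | h
    · rw [hμ]; exact h
    · exfalso; exact hj0 (by rw [hμ, ← h])
  set a := Real.sqrt μ with hadef
  have ha : 0 < a := Real.sqrt_pos.mpr hμpos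
  have ha2 : a * a = μ := Real.mul_self_sqrt hμpos.le
  set v : EuclideanSpace ℝ (Fin (2+m)) := WithLp.toLp 2 (a⁻¹ • (Z *ᵥ u)) with hvdef
  have hZu : Z *ᵥ (u : Fin (2+m) → ℝ) = a • (v : Fin (2+m) → ℝ) := by
    rw [hvdef, WithLp.ofLp_toLp, smul_smul, mul_inv_cancel₀ ha.ne', one_smul]
  have hZZ : Z * Z = -(Zᵀ * Z) := by
    nth_rewrite 1 [show Z = -Zᵀ from by rw [hZ, neg_neg]]
    rw [Matrix.neg_mul]
  have hZv : Z *ᵥ (v : Fin (2+m) → ℝ) = (-a) • (u : Fin (2+m) → ℝ) := by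
    rw [hvdef]
    show Z *ᵥ (a⁻¹ • (Z *ᵥ (u : Fin (2+m) → ℝ))) = _
    rw [Matrix.mulVec_smul, Matrix.mulVec_mulVec, hZZ, Matrix.neg_mulVec, hu]
    rw [smul_neg, smul_smul, neg_smul, inv_mul_eq_div]
    rw [← ha2]
    congr 1
    field_simp
  have huZu : (u : Fin (2+m) → ℝ) ⬝ᵥ (Z *ᵥ u) = 0 := by
    have e1 : (u : Fin (2+m) → ℝ) ⬝ᵥ (Z *ᵥ u) = (Zᵀ *ᵥ (u : Fin (2+m) → ℝ)) ⬝ᵥ u := by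
      rw [dotProduct_mulVec, ← Matrix.mulVec_transpose]
    have e2 : (Zᵀ *ᵥ (u : Fin (2+m) → ℝ)) ⬝ᵥ u = -((u : Fin (2+m) → ℝ) ⬝ᵥ (Z *ᵥ u)) := by
      rw [hZ, Matrix.neg_mulVec, neg_dotProduct, dotProduct_comm]
    linarith [e1.trans e2]
  have huv : (u : Fin (2+m) → ℝ) ⬝ᵥ (v : Fin (2+m) → ℝ) = 0 := by
    rw [hvdef]
    show (u : Fin (2+m) → ℝ) ⬝ᵥ (a⁻¹ • (Z *ᵥ (u : Fin (2+m) → ℝ))) = 0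
    rw [dotProduct_smul, huZu, smul_zero]
  have hvv : (v : Fin (2+m) → ℝ) ⬝ᵥ (v : Fin (2+m) → ℝ) = 1 := by
    have : (v : Fin (2+m) → ℝ) = a⁻¹ • (Z *ᵥ (u : Fin (2+m) → ℝ)) := rfl
    rw [this, dotProduct_smul, smul_dotProduct, ← hμ, smul_eq_mul, smul_eq_mul]
    field_simp [← ha2]
    rw [sq, ha2]
  -- extend {u, v} to an orthonormal basis
  set i0 : Fin (2+m) := ⟨0, by omega⟩ with hi0def
  set i1 : Fin (2+m) := ⟨1, by omega⟩ with hi1def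
  have hi01 : i0 ≠ i1 := by simp [hi0def, hi1def, Fin.ext_iff]
  set w : Fin (2+m) → EuclideanSpace ℝ (Fin (2+m)) := fun k => if k = i0 then u else v with hwdef
  have horth : Orthonormal ℝ (({i0, i1} : Set (Fin (2+m))).restrict w) := by
    rw [orthonormal_iff_ite]
    rintro ⟨i, hi⟩ ⟨j, hj⟩
    simp only [Set.restrict_apply, Subtype.mk.injEq]
    rcases hi with rfl | hi
    · rcases hj with rfl | hj
      · change inner ℝ (w i0) (w i0) = _
        rw [hdot]
        simp [hwdef, hdot, huu]
      · rw [Set.mem_singleton_iff] at hj; subst hj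
        change inner ℝ (w i0) (w i1) = _
        simp [hwdef, hi01, hi01.symm, hdot, huv]
    · rw [Set.mem_singleton_iff] at hi; subst hi
      rcases hj with rfl | hj
      · change inner ℝ (w i1) (w i0) = _
        rw [hdot]
        simp [hwdef, hi01, hi01.symm, dotProduct_comm (v : Fin (2+m) → ℝ), huv]
      · rw [Set.mem_singleton_iff] at hj; subst hj
        change inner ℝ (w i1) (w i1) = _
        rw [hdot]
        simp [hwdef, hi01.symm, hdot, hvv]
  obtain ⟨c, hc⟩ := horth.exists_orthonormalBasis_extension_of_card_eq
    (by simp [finrank_euclideanSpace])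
  have hcu : c i0 = u := by
    rw [hc i0 (by simp)]; simp [hwdef]
  have hcv : c i1 = v := by
    rw [hc i1 (by simp)]; simp [hwdef, hi01.symm]
  have hcd : ∀ j k, ((c j : EuclideanSpace ℝ (Fin (2+m))) : Fin (2+m) → ℝ) ⬝ᵥ (c k : Fin (2+m) → ℝ)
      = if j = k then 1 else 0 := by
    intro j k
    rw [← hdot]
    exact orthonormal_iff_ite.mp c.orthonormal j k
  -- the orthogonal matrix P₁ with columns c
  set P₁ : Matrix (Fin (2+m)) (Fin (2+m)) ℝ := Matrix.of fun i k => c k i with hP₁def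
  have hP₁ : P₁ᵀ * P₁ = 1 := by
    ext j k
    rw [Matrix.mul_apply, Matrix.one_apply, ← hcd j k]
    simp [hP₁def, dotProduct, mul_comm]
  have hP₁' : P₁ * P₁ᵀ = 1 := mul_eq_one_comm.mp hP₁
  set W : Matrix (Fin (2+m)) (Fin (2+m)) ℝ := P₁ᵀ * Z * P₁ with hWdef
  have hWskew : Wᵀ = -W := by
    rw [hWdef, Matrix.transpose_mul, Matrix.transpose_mul, Matrix.transpose_transpose, hZ]
    simp [Matrix.mul_assoc]
  have hZW : Z = P₁ * W * P₁ᵀ := by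
    rw [hWdef]
    calc Z = (P₁ * P₁ᵀ) * Z * (P₁ * P₁ᵀ) := by rw [hP₁']; simp
    _ = P₁ * (P₁ᵀ * Z * P₁) * P₁ᵀ := by simp only [Matrix.mul_assoc]
  have hWe : ∀ j k, W j k = ((c j : EuclideanSpace ℝ (Fin (2+m))) : Fin (2+m) → ℝ) ⬝ᵥ
      (Z *ᵥ (c k : Fin (2+m) → ℝ)) := by
    intro j k
    rw [hWdef, Matrix.mul_assoc, Matrix.mul_apply]
    simp only [Matrix.transpose_apply, hP₁def, Matrix.of_apply, dotProduct,
      Matrix.mul_apply, Matrix.mulVec, dotProduct]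
  have hWc0 : ∀ j, W j i0 = if j = i1 then a else 0 := by
    intro j
    rw [hWe, hcu, hZu, dotProduct_smul, ← hcv, hcd, smul_eq_mul]
    split_ifs <;> simp
  have hWc1 : ∀ j, W j i1 = if j = i0 then -a else 0 := by
    intro j
    rw [hWe, hcv, hZv, dotProduct_smul, ← hcu, hcd, smul_eq_mul]
    split_ifs <;> simp
  have hWr : ∀ j k, W j k = -W k j := by
    intro j k
    have := congrFun (congrFun hWskew k) j
    simpa [Matrix.transpose_apply] using this
  -- reindexing
  set e : Fin 2 ⊕ Fin m ≃ Fin (2+m) := finSumFinEquiv with hedef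
  have hei0 : e (Sum.inl 0) = i0 := by
    apply Fin.ext
    simp [hedef, hi0def]
  have hei1 : e (Sum.inl 1) = i1 := by
    apply Fin.ext
    simp [hedef, hi1def]
  have heinr : ∀ q : Fin m, ((e (Sum.inr q)) : ℕ) = 2 + (q : ℕ) := by
    intro q; simp [hedef]
  have hne0 : ∀ q : Fin m, e (Sum.inr q) ≠ i0 := fun q h => by
    have := congrArg Fin.val h
    rw [heinr q] at this
    simp [hi0def] at this
  have hne1 : ∀ q : Fin m, e (Sum.inr q) ≠ i1 := fun q h => by
    have := congrArg Fin.val h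
    rw [heinr q] at this
    simp [hi1def] at this
    omega
  set Z' : Matrix (Fin m) (Fin m) ℝ :=
    Matrix.of fun p q => W (e (Sum.inr p)) (e (Sum.inr q)) with hZ'def
  have hWblocks : W.submatrix e e = fromBlocks !![0, -a; a, 0] 0 0 Z' := by
    ext x y
    cases x with
    | inl p =>
      cases y with
      | inl q =>
        fin_cases p <;> fin_cases q <;>
          simp only [Matrix.submatrix_apply, Fin.mk_zero, Fin.mk_one, hei0, hei1,
            Matrix.fromBlocks_apply₁₁]
        · rw [hWc0 i0]; simp [hi01]
        · rw [hWc1 i0]; simp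
        · rw [hWc0 i1]; simp
        · rw [hWc1 i1]; simp [hi01.symm]
      | inr q =>
        have h0 : W (e (Sum.inl p)) (e (Sum.inr q)) = -W (e (Sum.inr q)) (e (Sum.inl p)) :=
          hWr _ _
        fin_cases p <;>
          simp only [Matrix.submatrix_apply, Fin.mk_zero, Fin.mk_one, hei0, hei1,
            Matrix.fromBlocks_apply₁₂, Matrix.zero_apply] <;>
          rw [hWr]
        · rw [hWc0 (e (Sum.inr q))]; simp [hne1 q]
        · rw [hWc1 (e (Sum.inr q))]; simp [hne0 q]
    | inr p =>
      cases y with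
      | inl q =>
        fin_cases q <;>
          simp only [Matrix.submatrix_apply, Fin.mk_zero, Fin.mk_one, hei0, hei1,
            Matrix.fromBlocks_apply₂₁, Matrix.zero_apply]
        · rw [hWc0 (e (Sum.inr p))]; simp [hne1 p]
        · rw [hWc1 (e (Sum.inr p))]; simp [hne0 p]
      | inr q => rfl
  have hW2 : W = (fromBlocks !![0, -a; a, 0] 0 0 Z').submatrix ⇑e.symm ⇑e.symm := by
    rw [← hWblocks]
    ext i j
    simp
  have hZ'skew : Z'ᵀ = -Z' := by
    ext p q
    simp only [hZ'def, Matrix.transpose_apply, Matrix.of_apply, Matrix.neg_apply]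
    exact hWr _ _
  obtain ⟨l, hl, lam, Q, hQ, hZ'eq⟩ := IH m (by omega) Z' hZ'skew
  set G : Matrix (Fin (2+m)) (Fin (2+m)) ℝ :=
    (fromBlocks (1 : Matrix (Fin 2) (Fin 2) ℝ) 0 0 Q).submatrix ⇑e.symm ⇑e.symm with hGdef
  have hGT : Gᵀ = (fromBlocks (1 : Matrix (Fin 2) (Fin 2) ℝ) 0 0 Qᵀ).submatrix ⇑e.symm ⇑e.symm := by
    rw [hGdef, Matrix.transpose_submatrix, Matrix.fromBlocks_transpose]
    simp only [Matrix.transpose_one, Matrix.transpose_zero]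
  have hGG : Gᵀ * G = 1 := by
    rw [hGT, hGdef, Matrix.submatrix_mul_equiv, Matrix.fromBlocks_multiply]
    simp only [Matrix.one_mul, Matrix.mul_one, Matrix.zero_mul, Matrix.mul_zero,
      add_zero, zero_add, hQ]
    rw [Matrix.fromBlocks_one, Matrix.submatrix_one_equiv]
  set Θm := skewBlockDiag m l lam with hΘmdef
  set Θ := skewBlockDiag (2+m) (l+1) (Fin.cons (-a) lam) with hΘdef
  have hΘ : Θ = (fromBlocks !![0, -a; a, 0] 0 0 Θm).submatrix ⇑e.symm ⇑e.symm := by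
    have hb := skewBlockDiag_block m l lam (-a)
    rw [neg_neg] at hb
    rw [hΘdef, ← hΘmdef] at *
    rw [← hb]
    ext i j
    simp [hedef]
  have hGθG : G * Θ * Gᵀ = W := by
    rw [hΘ, hGdef, hGT, Matrix.submatrix_mul_equiv, Matrix.submatrix_mul_equiv,
      Matrix.fromBlocks_multiply, Matrix.fromBlocks_multiply]
    simp only [Matrix.one_mul, Matrix.mul_one, Matrix.zero_mul, Matrix.mul_zero,
      add_zero, zero_add]
    rw [← hZ'eq]
    exact hW2.symm
  refine ⟨l + 1, by omega, Fin.cons (-a) lam, P₁ * G, ?_, ?_⟩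
  · rw [Matrix.transpose_mul, Matrix.mul_assoc, ← Matrix.mul_assoc P₁ᵀ P₁ G, hP₁,
      Matrix.one_mul, hGG]
  · rw [Matrix.transpose_mul, ← hΘdef,
      show P₁ * G * Θ * (Gᵀ * P₁ᵀ) = P₁ * (G * Θ * Gᵀ) * P₁ᵀ from by
        simp only [Matrix.mul_assoc], hGθG, ← hZW]


/-- real Schur canonical form of a skew-symmetric matrix.
Every real skew-symmetric `n × n` matrix `Z` can be written as `Z = P Θ Pᵀ` with `P`
orthogonal and `Θ = diag(E(λ₁), …, E(λ_l), 0)` block diagonal, where `2l ≤ n`,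
`λ₁, …, λ_l ∈ ℝ` and `E(λ) = [[0, λ], [-λ, 0]]`. -/
theorem stmt12 {n : ℕ} (Z : Matrix (Fin n) (Fin n) ℝ) (hZ : Zᵀ = -Z) :
    ∃ (l : ℕ) (_ : 2 * l ≤ n) (lam : Fin l → ℝ) (P : Matrix (Fin n) (Fin n) ℝ),
      Pᵀ * P = 1 ∧ Z = P * skewBlockDiag n l lam * Pᵀ := by
  exact skew_aux n Z hZ
end
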